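/- Consider the generalized gadget network on vertices s, v₁, …, v_{2n}, t with: a spine path s→v₁→⋯→v_{2n}→t of arcs with flow value 4; arcs of value 2 from s to v₁, v₃, …, v_{2n−1} and from v₂, v₄, …, v_{2n} to t; and two parallel arcs of value 1 from v_{2i−1} to v_{2i} for each i. The greedy decomposition that first extracts the value-4 spine path yields 2n + 1 path flows, while there exists a decomposition into n + 3 path flows; hence the gap between greedy and optimal is at least n − 2 and can be arbitrarily large. -/

import Mathlib

/-- A multidigraph: a set of arcs `E` over vertices `V`, with source and destination maps. -/
structure MultiDigraph (V E : Type) where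
  src : E → V
  dst : E → V

namespace MultiDigraph

variable {V E : Type}

/-- `p` is a directed walk from `u` to `v` (as a list of consecutive arcs). -/
def IsWalk (D : MultiDigraph V E) : V → V → List E → Prop
  | u, v, [] => u = v
  | u, v, e :: p => D.src e = u ∧ D.IsWalk (D.dst e) v p

/-- A directed path from `u` to `v`: a walk without repeated arcs. -/
def IsPath (D : MultiDigraph V E) (u v : V) (p : List E) : Prop :=
  D.IsWalk u v p ∧ p.Nodup

/-- A directed cycle: a nonempty closed walk without repeated arcs. -/
def IsCycle (D : MultiDigraph V E) (p : List E) : Prop :=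
  p ≠ [] ∧ p.Nodup ∧ ∃ u, D.IsWalk u u p

/-- The flow sending value `r` along each arc of `p` and `0` elsewhere. -/
def pathFlow [DecidableEq E] (p : List E) (r : ℝ) : E → ℝ :=
  fun e => if e ∈ p then r else 0

variable [Fintype E] [DecidableEq V]

/-- Net flow out of a vertex `v` (outflow minus inflow), i.e. the balance `b_x(v)`. -/
def excess (D : MultiDigraph V E) (x : E → ℝ) (v : V) : ℝ :=
  (∑ e : E, if D.src e = v then x e else 0) - (∑ e : E, if D.dst e = v then x e else 0)

/-- An `(s,t)`-flow: nonnegative and conserved at every vertex other than `s` and `t`. -/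
def IsSTFlow (D : MultiDigraph V E) (s t : V) (x : E → ℝ) : Prop :=
  (∀ e, 0 ≤ x e) ∧ ∀ v, v ≠ s → v ≠ t → D.excess x v = 0

/-- `x` respects the capacity function `u`. -/
def IsFlowUnder (D : MultiDigraph V E) (u x : E → ℝ) : Prop :=
  ∀ e, 0 ≤ x e ∧ x e ≤ u e

/-- `x` is a maximum `(s,t)`-flow with respect to capacities `u`. -/
def IsMaxFlow (D : MultiDigraph V E) (u : E → ℝ) (s t : V) (x : E → ℝ) : Prop :=
  D.IsFlowUnder u x ∧ D.IsSTFlow s t x ∧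
    ∀ y, D.IsFlowUnder u y → D.IsSTFlow s t y → D.excess y s ≤ D.excess x s

/-- A circulation: a (finite) sum of cycle flows. -/
def IsCirculation [DecidableEq E] (D : MultiDigraph V E) (c : E → ℝ) : Prop :=
  ∃ (n : ℕ) (C : Fin n → List E) (r : Fin n → ℝ),
    (∀ i, D.IsCycle (C i) ∧ 0 < r i) ∧ c = ∑ i, pathFlow (C i) (r i)

/-- `x` decomposes into exactly `k` `(s,t)`-path flows. -/
def Splittable [DecidableEq E] (D : MultiDigraph V E) (s t : V) (x : E → ℝ) (k : ℕ) : Prop :=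
  ∃ (P : Fin k → List E) (r : Fin k → ℝ),
    (∀ i, D.IsPath s t (P i) ∧ 0 < r i) ∧ x = ∑ i, pathFlow (P i) (r i)

/-- `x` decomposes into exactly `k` `(s,t)`-path flows, plus possibly a circulation. -/
def SplittableC [DecidableEq E] (D : MultiDigraph V E) (s t : V) (x : E → ℝ) (k : ℕ) : Prop :=
  ∃ (P : Fin k → List E) (r : Fin k → ℝ) (c : E → ℝ),
    D.IsCirculation c ∧ (∀ i, D.IsPath s t (P i) ∧ 0 < r i) ∧
    x = c + ∑ i, pathFlow (P i) (r i)

/-- The cost of a path: its number of distinct colours. -/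
def pathCost {C : Type} [DecidableEq C] (col : E → C) (p : List E) : ℕ :=
  (p.map col).toFinset.card

/-- `x` admits a decomposition into `(s,t)`-path flows (plus possibly a circulation,
which does not affect the cost) whose total colour-cost is `K`. -/
def DecompCost [DecidableEq E] {C : Type} [DecidableEq C] (D : MultiDigraph V E)
    (col : E → C) (s t : V) (x : E → ℝ) (K : ℕ) : Prop :=
  ∃ (k : ℕ) (P : Fin k → List E) (r : Fin k → ℝ) (c : E → ℝ),
    D.IsCirculation c ∧ (∀ i, D.IsPath s t (P i) ∧ 0 < r i) ∧
    x = c + ∑ i, pathFlow (P i) (r i) ∧ ∑ i, pathCost col (P i) = K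

/-- `x` admits a decomposition into `(s,t)`-path flows (only) of total colour-cost `K`. -/
def DecompCostPure [DecidableEq E] {C : Type} [DecidableEq C] (D : MultiDigraph V E)
    (col : E → C) (s t : V) (x : E → ℝ) (K : ℕ) : Prop :=
  ∃ (k : ℕ) (P : Fin k → List E) (r : Fin k → ℝ),
    (∀ i, D.IsPath s t (P i) ∧ 0 < r i) ∧
    x = ∑ i, pathFlow (P i) (r i) ∧ ∑ i, pathCost col (P i) = K

end MultiDigraph

open MultiDigraph

/-- Arcs of the generalized gadget network on `s, v₁, …, v_{2n}, t`:
a spine of `2n+1` arcs (flow value 4); value-2 arcs `s → v_{2i+1}` and `v_{2i+2} → t`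
(`0 ≤ i < n`); and two parallel value-1 arcs `v_{2i+1} → v_{2i+2}`. -/
inductive GArc (n : ℕ) where
  | spine (k : Fin (2 * n + 1))
  | src2 (i : Fin n)
  | snk2 (i : Fin n)
  | par (i : Fin n) (b : Bool)
deriving DecidableEq, Fintype

/-- The gadget network, with vertices encoded as naturals: `s = 0`, `vᵢ = i`,
`t = 2n + 1`. -/
def gadgetNet (n : ℕ) : MultiDigraph ℕ (GArc n) where
  src := fun e => match e with
    | .spine k => (k : ℕ)
    | .src2 _ => 0
    | .snk2 i => 2 * (i : ℕ) + 2
    | .par i _ => 2 * (i : ℕ) + 1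
  dst := fun e => match e with
    | .spine k => (k : ℕ) + 1
    | .src2 i => 2 * (i : ℕ) + 1
    | .snk2 _ => 2 * n + 1
    | .par i _ => 2 * (i : ℕ) + 2

/-- The flow on the gadget network: 4 on the spine, 2 on the side arcs, 1 on the
parallel arcs. -/
def gadgetFlow (n : ℕ) : GArc n → ℝ := fun e => match e with
  | .spine _ => 4
  | .src2 _ => 2
  | .snk2 _ => 2
  | .par _ _ => 1

/-- The spine `(s,t)`-path of value-4 arcs. -/
def spinePath (n : ℕ) : List (GArc n) := (List.finRange (2 * n + 1)).map GArc.spine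

-- ## helper sum lemmas
lemma sum_ite_one' {N a : ℕ} (c : ℝ) (h : a < N) (f : ℕ → Prop) [DecidablePred f]
    (hf : ∀ i, f i ↔ i = a) :
    ∑ i ∈ Finset.range N, (if f i then c else 0) = c := by
  simp only [hf]
  rw [Finset.sum_ite_eq' (Finset.range N) a (fun _ => c)]
  simp [h]

lemma sum_ite_two' {N a : ℕ} (c : ℝ) (h : a + 1 < N) (f : ℕ → Prop) [DecidablePred f]
    (hf : ∀ i, f i ↔ i = a ∨ i = a + 1) :
    ∑ i ∈ Finset.range N, (if f i then c else 0) = c + c := by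
  have key : ∀ i, (if f i then c else 0)
      = (if i = a then c else 0) + (if i = a + 1 then c else 0) := by
    intro i
    by_cases h1 : i = a
    · simp [hf, h1, Nat.succ_ne_self a]
    · by_cases h2 : i = a + 1 <;> simp [hf, h1, h2]
  simp only [key]
  rw [Finset.sum_add_distrib,
    Finset.sum_ite_eq' (Finset.range N) a (fun _ => c),
    Finset.sum_ite_eq' (Finset.range N) (a+1) (fun _ => c)]
  simp [Finset.mem_range.mpr h, Finset.mem_range.mpr (by omega : a < N)]

-- ## the two zigzag paths
def Ztail (m : ℕ) (b : Bool) : ℕ → List (GArc (m+1))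
  | 0 => [GArc.spine ⟨2*m+2, by omega⟩]
  | j+1 => GArc.spine ⟨2*(m-j), by omega⟩ :: GArc.par ⟨m-j, by omega⟩ b :: Ztail m b j

lemma Ztail_walk (m : ℕ) (b : Bool) (j : ℕ) (hj : j ≤ m+1) :
    (gadgetNet (m+1)).IsWalk (2*(m+1-j)) (2*(m+1)+1) (Ztail m b j) := by
  induction j with
  | zero =>
    show _ ∧ _
    refine ⟨by simp [gadgetNet]; omega, ?_⟩
    show (2*m+2)+1 = 2*(m+1)+1
    omega
  | succ j ih =>
    refine ⟨by simp [gadgetNet]; try omega, by simp [gadgetNet]; try omega, ?_⟩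
    show (gadgetNet (m+1)).IsWalk (2*(m-j)+2) _ _
    rw [show 2*(m-j)+2 = 2*(m+1-j) by omega]
    exact ih (by omega)

lemma mem_Ztail (m : ℕ) (b : Bool) (j : ℕ) (e : GArc (m+1)) :
    e ∈ Ztail m b j ↔
      (∃ i : Fin (m+2), e = GArc.spine ⟨2*i.val, by omega⟩ ∧ m+1 ≤ i.val + j) ∨
      (∃ i : Fin (m+1), e = GArc.par i b ∧ m+1 ≤ i.val + j) := by
  induction j with
  | zero =>
    simp only [Ztail, List.mem_singleton]
    constructor
    · rintro rfl
      refine Or.inl ⟨⟨m+1, by omega⟩, by simp only [GArc.spine.injEq, Fin.mk.injEq]; omega, by simp⟩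
    · rintro (⟨i, rfl, hi⟩ | ⟨i, rfl, hi⟩)
      · have : i.val = m+1 := by omega
        simp only [GArc.spine.injEq, Fin.ext_iff, this]
        omega
      · have := i.isLt; omega
  | succ j ih =>
    simp only [Ztail, List.mem_cons, ih]
    constructor
    · rintro (rfl | rfl | (⟨i, rfl, hi⟩ | ⟨i, rfl, hi⟩))
      · exact Or.inl ⟨⟨m-j, by omega⟩, by simp only [GArc.spine.injEq, Fin.mk.injEq], by simp; omega⟩
      · exact Or.inr ⟨⟨m-j, by omega⟩, rfl, by simp; omega⟩
      · exact Or.inl ⟨i, rfl, by omega⟩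
      · exact Or.inr ⟨i, rfl, by omega⟩
    · rintro (⟨i, rfl, hi⟩ | ⟨i, rfl, hi⟩)
      · by_cases h : m+1 ≤ i.val + j
        · exact Or.inr (Or.inr (Or.inl ⟨i, rfl, h⟩))
        · have : i.val = m - j := by omega
          exact Or.inl (by simp [GArc.spine.injEq, Fin.ext_iff, this])
      · by_cases h : m+1 ≤ i.val + j
        · exact Or.inr (Or.inr (Or.inr ⟨i, rfl, h⟩))
        · have : i.val = m - j := by omega
          refine Or.inr (Or.inl ?_)
          simp [GArc.par.injEq, Fin.ext_iff, this]

lemma Ztail_nodup (m : ℕ) (b : Bool) (j : ℕ) (hj : j ≤ m+1) : (Ztail m b j).Nodup := by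
  induction j with
  | zero => simp [Ztail]
  | succ j ih =>
    simp only [Ztail, List.nodup_cons, List.mem_cons]
    refine ⟨?_, ?_, ih (by omega)⟩
    · rintro (h | h)
      · cases h
      · rw [mem_Ztail] at h
        rcases h with ⟨i, hi, hle⟩ | ⟨i, hi, hle⟩
        · simp only [GArc.spine.injEq, Fin.ext_iff] at hi
          have := i.isLt; omega
        · cases hi
    · intro h
      rw [mem_Ztail] at h
      rcases h with ⟨i, hi, hle⟩ | ⟨i, hi, hle⟩
      · cases hi
      · simp only [GArc.par.injEq, Fin.ext_iff] at hi
        omega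

def Zpath (m : ℕ) (b : Bool) : List (GArc (m+1)) := Ztail m b (m+1)

lemma Zpath_isPath (m : ℕ) (b : Bool) :
    (gadgetNet (m+1)).IsPath 0 (2*(m+1)+1) (Zpath m b) := by
  refine ⟨?_, Ztail_nodup m b (m+1) le_rfl⟩
  have := Ztail_walk m b (m+1) le_rfl
  simpa [Zpath] using this

lemma spine_mem_Zpath (m : ℕ) (b : Bool) (k : Fin (2*(m+1)+1)) :
    GArc.spine k ∈ Zpath m b ↔ k.val % 2 = 0 := by
  rw [Zpath, mem_Ztail]
  constructor
  · rintro (⟨i, hi, -⟩ | ⟨i, hi, -⟩)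
    · simp only [GArc.spine.injEq, Fin.ext_iff] at hi
      omega
    · cases hi
  · intro h
    have := k.isLt
    exact Or.inl ⟨⟨k.val/2, by omega⟩, by simp [GArc.spine.injEq, Fin.ext_iff]; omega, by omega⟩

lemma par_mem_Zpath (m : ℕ) (b b' : Bool) (a : Fin (m+1)) :
    GArc.par a b' ∈ Zpath m b ↔ b' = b := by
  rw [Zpath, mem_Ztail]
  constructor
  · rintro (⟨i, hi, -⟩ | ⟨i, hi, -⟩)
    · cases hi
    · simp only [GArc.par.injEq] at hi
      exact hi.2
  · rintro rfl
    exact Or.inr ⟨a, rfl, by omega⟩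

lemma src2_not_mem_Zpath (m : ℕ) (b : Bool) (a : Fin (m+1)) :
    GArc.src2 a ∉ Zpath m b := by
  rw [Zpath, mem_Ztail]
  rintro (⟨i, hi, -⟩ | ⟨i, hi, -⟩) <;> cases hi

lemma snk2_not_mem_Zpath (m : ℕ) (b : Bool) (a : Fin (m+1)) :
    GArc.snk2 a ∉ Zpath m b := by
  rw [Zpath, mem_Ztail]
  rintro (⟨i, hi, -⟩ | ⟨i, hi, -⟩) <;> cases hi

-- ## the B family
def Bfun (m : ℕ) (i : ℕ) : List (GArc (m+1)) :=
  if i = 0 then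
    [GArc.spine ⟨0, by omega⟩, GArc.spine ⟨1, by omega⟩, GArc.snk2 ⟨0, by omega⟩]
  else if h : i ≤ m then
    [GArc.src2 ⟨i-1, by omega⟩, GArc.spine ⟨2*i-1, by omega⟩, GArc.spine ⟨2*i, by omega⟩,
     GArc.spine ⟨2*i+1, by omega⟩, GArc.snk2 ⟨i, by omega⟩]
  else if i = m+1 then
    [GArc.src2 ⟨m, by omega⟩, GArc.spine ⟨2*m+1, by omega⟩, GArc.spine ⟨2*m+2, by omega⟩]
  else []

lemma Bfun_isPath (m i : ℕ) (hi : i ≤ m+1) :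
    (gadgetNet (m+1)).IsPath 0 (2*(m+1)+1) (Bfun m i) := by
  rcases eq_or_ne i 0 with rfl | h0
  · exact ⟨⟨rfl, rfl, rfl, rfl⟩, by simp [Bfun]⟩
  · by_cases h : i ≤ m
    · rw [Bfun, if_neg h0, dif_pos h]
      refine ⟨⟨rfl, ?_, ?_, ?_, ?_, ?_⟩, ?_⟩
      · show (2*i-1 : ℕ) = 2*(i-1)+1; omega
      · show (2*i : ℕ) = (2*i-1)+1; omega
      · show (2*i+1 : ℕ) = 2*i+1; rfl
      · show (2*i+2 : ℕ) = (2*i+1)+1; rfl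
      · show (2*(m+1)+1 : ℕ) = 2*(m+1)+1; rfl
      · simp
        try omega
    · have hi' : i = m+1 := by omega
      subst hi'
      rw [Bfun, if_neg h0, dif_neg h, if_pos rfl]
      refine ⟨⟨rfl, ?_, ?_, ?_⟩, ?_⟩
      · show (2*m+1 : ℕ) = 2*m+1; rfl
      · show (2*m+2 : ℕ) = (2*m+1)+1; rfl
      · show (2*(m+1)+1 : ℕ) = (2*m+2)+1; omega
      · simp [GArc.spine.injEq, Fin.ext_iff]

lemma spine_mem_Bfun (m i : ℕ) (k : Fin (2*(m+1)+1)) :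
    GArc.spine k ∈ Bfun m i ↔ 2*i ≤ k.val + 1 ∧ k.val ≤ 2*i+1 := by
  have hk := k.isLt
  rcases eq_or_ne i 0 with rfl | h0
  · rw [Bfun, if_pos rfl]
    simp only [List.mem_cons, List.not_mem_nil, GArc.spine.injEq, GArc.src2.injEq, GArc.snk2.injEq, Fin.ext_iff, reduceCtorEq, or_false, false_or]
    omega
  · by_cases h : i ≤ m
    · rw [Bfun, if_neg h0, dif_pos h]
      simp [Fin.ext_iff]
      omega
    · by_cases h1 : i = m+1
      · subst h1
        rw [Bfun, if_neg h0, dif_neg h, if_pos rfl]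
        simp [Fin.ext_iff]
        omega
      · rw [Bfun, if_neg h0, dif_neg h, if_neg h1]
        simp
        omega

lemma src2_mem_Bfun (m i : ℕ) (a : Fin (m+1)) :
    GArc.src2 a ∈ Bfun m i ↔ i = a.val + 1 := by
  have ha := a.isLt
  rcases eq_or_ne i 0 with rfl | h0
  · rw [Bfun, if_pos rfl]
    simp only [List.mem_cons, List.not_mem_nil, GArc.spine.injEq, GArc.src2.injEq, GArc.snk2.injEq, Fin.ext_iff, reduceCtorEq, or_false, false_or]
  · by_cases h : i ≤ m
    · rw [Bfun, if_neg h0, dif_pos h]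
      simp [Fin.ext_iff]
      omega
    · by_cases h1 : i = m+1
      · subst h1
        rw [Bfun, if_neg h0, dif_neg h, if_pos rfl]
        simp [Fin.ext_iff]
        omega
      · rw [Bfun, if_neg h0, dif_neg h, if_neg h1]
        simp
        omega

lemma snk2_mem_Bfun (m i : ℕ) (a : Fin (m+1)) :
    GArc.snk2 a ∈ Bfun m i ↔ i = a.val := by
  have ha := a.isLt
  rcases eq_or_ne i 0 with rfl | h0
  · rw [Bfun, if_pos rfl]
    simp only [List.mem_cons, List.not_mem_nil, GArc.spine.injEq, GArc.src2.injEq, GArc.snk2.injEq, Fin.ext_iff, reduceCtorEq, or_false, false_or]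
    omega
  · by_cases h : i ≤ m
    · rw [Bfun, if_neg h0, dif_pos h]
      simp [Fin.ext_iff]
      omega
    · by_cases h1 : i = m+1
      · subst h1
        rw [Bfun, if_neg h0, dif_neg h, if_pos rfl]
        simp [Fin.ext_iff]
        omega
      · rw [Bfun, if_neg h0, dif_neg h, if_neg h1]
        simp
        omega

lemma par_not_mem_Bfun (m i : ℕ) (a : Fin (m+1)) (b : Bool) :
    GArc.par a b ∉ Bfun m i := by
  rcases eq_or_ne i 0 with rfl | h0
  · simp [Bfun]
  · by_cases h : i ≤ m
    · rw [Bfun, if_neg h0, dif_pos h]; simp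
    · by_cases h1 : i = m+1
      · subst h1; rw [Bfun, if_neg h0, dif_neg h, if_pos rfl]; simp
      · rw [Bfun, if_neg h0, dif_neg h, if_neg h1]; simp

lemma decomp1 (m : ℕ) :
    gadgetFlow (m+1) = pathFlow (Zpath m true) 1 + pathFlow (Zpath m false) 1
      + ∑ i ∈ Finset.range (m+2), pathFlow (Bfun m i) 2 := by
  funext e
  simp only [Pi.add_apply, Finset.sum_apply, pathFlow]
  cases e with
  | spine k =>
    have hk := k.isLt
    simp only [gadgetFlow, spine_mem_Zpath]
    by_cases h : k.val % 2 = 0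
    · rw [sum_ite_one' 2 (show k.val/2 < m+2 by omega)
        (fun i => GArc.spine k ∈ Bfun m i)
        (fun i => by simp only [spine_mem_Bfun]; omega)]
      simp [h]
      norm_num
    · rw [sum_ite_two' 2 (show k.val/2 + 1 < m+2 by omega)
        (fun i => GArc.spine k ∈ Bfun m i)
        (fun i => by simp only [spine_mem_Bfun]; omega)]
      simp [h]
      norm_num
  | src2 a =>
    have ha := a.isLt
    simp only [gadgetFlow, src2_not_mem_Zpath, if_false]
    rw [sum_ite_one' 2 (show a.val+1 < m+2 by omega)
      (fun i => GArc.src2 a ∈ Bfun m i) (fun i => src2_mem_Bfun m i a)]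
    norm_num
  | snk2 a =>
    have ha := a.isLt
    simp only [gadgetFlow, snk2_not_mem_Zpath, if_false]
    rw [sum_ite_one' 2 (show a.val < m+2 by omega)
      (fun i => GArc.snk2 a ∈ Bfun m i) (fun i => snk2_mem_Bfun m i a)]
    norm_num
  | par a b =>
    simp only [gadgetFlow, par_mem_Zpath, par_not_mem_Bfun, if_false,
      Finset.sum_const_zero]
    cases b <;> norm_num

lemma part1 (m : ℕ) :
    (gadgetNet (m+1)).Splittable 0 (2*(m+1)+1) (gadgetFlow (m+1)) ((m+1)+3) := by
  classical
  set F : ℕ → GArc (m+1) → ℝ := fun j =>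
    if j = 0 then pathFlow (Zpath m true) 1
    else if j = 1 then pathFlow (Zpath m false) 1
    else pathFlow (Bfun m (j-2)) 2 with hFdef
  refine ⟨fun i => if i.val = 0 then Zpath m true else if i.val = 1 then Zpath m false
      else Bfun m (i.val - 2),
    fun i => if i.val ≤ 1 then 1 else 2, fun i => ?_, ?_⟩
  · have hi := i.isLt
    constructor
    · dsimp only
      split
      · exact Zpath_isPath m true
      · split
        · exact Zpath_isPath m false
        · exact Bfun_isPath m _ (by omega)
    · dsimp only
      split <;> norm_num
  · have key : ∀ i : Fin (m+1+3),
        pathFlow (if i.val = 0 then Zpath m true else if i.val = 1 then Zpath m false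
          else Bfun m (i.val - 2)) (if i.val ≤ 1 then 1 else 2) = F i.val := by
      intro i
      by_cases h0 : i.val = 0
      · simp [hFdef, h0]
      · by_cases h1 : i.val = 1
        · simp [hFdef, h0, h1]
        · rw [if_neg h0, if_neg h1, if_neg (by omega : ¬ i.val ≤ 1), hFdef]
          simp only [h0, h1, if_false]
    have hsum : (∑ i : Fin (m+1+3),
        pathFlow (if i.val = 0 then Zpath m true else if i.val = 1 then Zpath m false
          else Bfun m (i.val - 2)) (if i.val ≤ 1 then 1 else 2))
        = ∑ j ∈ Finset.range (m+1+3), F j := by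
      rw [← Fin.sum_univ_eq_sum_range F (m+1+3)]
      exact Finset.sum_congr rfl (fun i _ => key i)
    rw [hsum]
    rw [show (m+1+3) = (m+2)+1+1 by omega]
    rw [Finset.sum_range_succ', Finset.sum_range_succ']
    have hB : ∀ j, F (j+1+1) = pathFlow (Bfun m j) 2 := fun j => by
      simp [hFdef]
    simp only [hB]
    rw [decomp1]
    have h0 : F 0 = pathFlow (Zpath m true) 1 := by simp [hFdef]
    have h1 : F (0+1) = pathFlow (Zpath m false) 1 := by simp [hFdef]
    rw [h0, h1]
    abel

-- ## Part 2: the residual flow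
def resid (n : ℕ) : GArc n → ℝ := fun e => match e with
  | .spine _ => 0
  | .par _ _ => 1
  | _ => 2

lemma residual_eq (n : ℕ) : gadgetFlow n - pathFlow (spinePath n) 4 = resid n := by
  funext e
  simp only [Pi.sub_apply, pathFlow, spinePath]
  cases e <;> simp [gadgetFlow, resid, List.mem_map] <;> norm_num

def QL (m : ℕ) (j : ℕ) : List (GArc (m+1)) :=
  if h : j < 2*(m+1) then
    [GArc.src2 ⟨j/2, by omega⟩, GArc.par ⟨j/2, by omega⟩ (decide (j % 2 = 0)),
     GArc.snk2 ⟨j/2, by omega⟩]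
  else []

lemma QL_isPath (m j : ℕ) (hj : j < 2*(m+1)) :
    (gadgetNet (m+1)).IsPath 0 (2*(m+1)+1) (QL m j) := by
  rw [QL, dif_pos hj]
  refine ⟨⟨rfl, rfl, rfl, rfl⟩, ?_⟩
  simp

lemma spine_not_mem_QL (m j : ℕ) (k : Fin (2*(m+1)+1)) : GArc.spine k ∉ QL m j := by
  by_cases h : j < 2*(m+1)
  · rw [QL, dif_pos h]; simp
  · rw [QL, dif_neg h]; simp

lemma src2_mem_QL (m j : ℕ) (a : Fin (m+1)) :
    GArc.src2 a ∈ QL m j ↔ j = 2*a.val ∨ j = 2*a.val + 1 := by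
  have ha := a.isLt
  by_cases h : j < 2*(m+1)
  · rw [QL, dif_pos h]
    simp [Fin.ext_iff]
    omega
  · rw [QL, dif_neg h]
    simp
    omega

lemma snk2_mem_QL (m j : ℕ) (a : Fin (m+1)) :
    GArc.snk2 a ∈ QL m j ↔ j = 2*a.val ∨ j = 2*a.val + 1 := by
  have ha := a.isLt
  by_cases h : j < 2*(m+1)
  · rw [QL, dif_pos h]
    simp [Fin.ext_iff]
    omega
  · rw [QL, dif_neg h]
    simp
    omega

lemma par_mem_QL (m j : ℕ) (a : Fin (m+1)) (b : Bool) :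
    GArc.par a b ∈ QL m j ↔ j = (if b then 2*a.val else 2*a.val + 1) := by
  have ha := a.isLt
  by_cases h : j < 2*(m+1)
  · rw [QL, dif_pos h]
    cases b <;> simp [Fin.ext_iff] <;> omega
  · rw [QL, dif_neg h]
    cases b <;> simp <;> omega

lemma part2upper (m : ℕ) :
    (gadgetNet (m+1)).Splittable 0 (2*(m+1)+1) (resid (m+1)) (2*(m+1)) := by
  classical
  refine ⟨fun i => QL m i.val, fun _ => 1, fun i => ⟨QL_isPath m i.val i.isLt, one_pos⟩, ?_⟩
  have hsum : (∑ i : Fin (2*(m+1)), pathFlow (QL m i.val) 1)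
      = ∑ j ∈ Finset.range (2*(m+1)), pathFlow (QL m j) 1 :=
    Fin.sum_univ_eq_sum_range (fun j => pathFlow (QL m j) 1) (2*(m+1))
  rw [hsum]
  funext e
  simp only [Finset.sum_apply, pathFlow]
  cases e with
  | spine k =>
    simp [resid, spine_not_mem_QL]
  | src2 a =>
    have ha := a.isLt
    rw [sum_ite_two' 1 (show 2*a.val + 1 < 2*(m+1) by omega)
      (fun j => GArc.src2 a ∈ QL m j) (fun j => src2_mem_QL m j a)]
    norm_num [resid]
  | snk2 a =>
    have ha := a.isLt
    rw [sum_ite_two' 1 (show 2*a.val + 1 < 2*(m+1) by omega)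
      (fun j => GArc.snk2 a ∈ QL m j) (fun j => snk2_mem_QL m j a)]
    norm_num [resid]
  | par a b =>
    have ha := a.isLt
    rw [sum_ite_one' 1 (show (if b then 2*a.val else 2*a.val+1) < 2*(m+1) by split <;> omega)
      (fun j => GArc.par a b ∈ QL m j) (fun j => par_mem_QL m j a b)]
    norm_num [resid]

lemma part2lower (m : ℕ) (k : ℕ)
    (hk : (gadgetNet (m+1)).Splittable 0 (2*(m+1)+1) (resid (m+1)) k) :
    2*(m+1) ≤ k := by
  classical
  obtain ⟨P, r, hPr, hsum⟩ := hk
  have hterm_nonneg : ∀ (e : GArc (m+1)) (j : Fin k), 0 ≤ pathFlow (P j) (r j) e := by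
    intro e j
    simp only [pathFlow]
    split
    · exact (hPr j).2.le
    · exact le_rfl
  have hns : ∀ (i : Fin k) (a : Fin (2*(m+1)+1)), GArc.spine a ∉ P i := by
    intro i a hmem
    have h0 : (∑ j : Fin k, pathFlow (P j) (r j) (GArc.spine a)) = 0 := by
      have := congrFun hsum (GArc.spine a)
      simp only [Finset.sum_apply] at this
      rw [← this]
      simp [resid]
    have hle : pathFlow (P i) (r i) (GArc.spine a)
        ≤ ∑ j : Fin k, pathFlow (P j) (r j) (GArc.spine a) :=
      Finset.single_le_sum (fun j _ => hterm_nonneg _ j) (Finset.mem_univ i)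
    rw [h0] at hle
    have heq : pathFlow (P i) (r i) (GArc.spine a) = r i := by simp [pathFlow, hmem]
    rw [heq] at hle
    exact absurd ((hPr i).2.trans_le hle) (lt_irrefl 0)
  have hstruct : ∀ i : Fin k, ∃ (a : Fin (m+1)) (b : Bool),
      P i = [GArc.src2 a, GArc.par a b, GArc.snk2 a] := by
    intro i
    have hwalk := (hPr i).1.1
    rcases hP : P i with _ | ⟨e1, rest⟩
    · rw [hP] at hwalk
      exact absurd hwalk (by simp [IsWalk])
    · rw [hP] at hwalk
      obtain ⟨h1, hwalk⟩ := hwalk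
      have hm1 : e1 ∈ P i := by rw [hP]; exact List.mem_cons_self
      cases e1 with
      | spine c => exact absurd hm1 (hns i c)
      | snk2 c => exact absurd h1 (by simp [gadgetNet])
      | par c b => exact absurd h1 (by simp [gadgetNet])
      | src2 a =>
        rcases rest with _ | ⟨e2, rest2⟩
        · have ha := a.isLt
          exact absurd hwalk (by simp only [IsWalk, gadgetNet]; omega)
        · obtain ⟨h2, hwalk⟩ := hwalk
          have hm2 : e2 ∈ P i := by rw [hP]; simp
          cases e2 with
          | spine c => exact absurd hm2 (hns i c)
          | src2 c => exact absurd h2 (by simp [gadgetNet])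
          | snk2 c => exact absurd h2 (by simp only [gadgetNet]; omega)
          | par c b =>
            have hca : c = a := Fin.ext (by simp only [gadgetNet] at h2; omega)
            subst hca
            rcases rest2 with _ | ⟨e3, rest3⟩
            · have ha := c.isLt
              exact absurd hwalk (by simp only [IsWalk, gadgetNet]; omega)
            · obtain ⟨h3, hwalk⟩ := hwalk
              have hm3 : e3 ∈ P i := by rw [hP]; simp
              cases e3 with
              | spine d => exact absurd hm3 (hns i d)
              | src2 d => exact absurd h3 (by simp only [gadgetNet]; omega)
              | par d b' => exact absurd h3 (by simp only [gadgetNet]; omega)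
              | snk2 d =>
                have hda : d = c := Fin.ext (by simp only [gadgetNet] at h3; omega)
                subst hda
                rcases rest3 with _ | ⟨e4, rest4⟩
                · exact ⟨d, b, rfl⟩
                · obtain ⟨h4, -⟩ := hwalk
                  cases e4 with
                  | spine d =>
                    have := d.isLt
                    exact absurd h4 (by simp only [gadgetNet]; omega)
                  | src2 d => exact absurd h4 (by simp only [gadgetNet]; omega)
                  | snk2 d =>
                    have := d.isLt
                    exact absurd h4 (by simp only [gadgetNet]; omega)
                  | par d b' =>
                    have := d.isLt
                    exact absurd h4 (by simp only [gadgetNet]; omega)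
  choose A B hAB using hstruct
  have hsurj : Function.Surjective (fun i : Fin k => (A i, B i)) := by
    rintro ⟨a, b⟩
    by_contra hno
    push_neg at hno
    have hval : (∑ j : Fin k, pathFlow (P j) (r j) (GArc.par a b)) = 1 := by
      have := congrFun hsum (GArc.par a b)
      simp only [Finset.sum_apply] at this
      rw [← this]
      simp [resid]
    have hzero : ∀ j : Fin k, pathFlow (P j) (r j) (GArc.par a b) = 0 := by
      intro j
      have hne : (A j, B j) ≠ (a, b) := hno j
      have hnm : GArc.par a b ∉ P j := by
        rw [hAB j]
        simp only [List.mem_cons, List.not_mem_nil, or_false]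
        rintro (h | h | h)
        · cases h
        · rw [GArc.par.injEq] at h
          exact hne (by rw [Prod.mk.injEq]; exact ⟨h.1.symm, h.2.symm⟩)
        · cases h
      simp [pathFlow, hnm]
    rw [Finset.sum_eq_zero (fun j _ => hzero j)] at hval
    norm_num at hval
  have hcard := Fintype.card_le_of_surjective _ hsurj
  simp at hcard
  omega

/-- On the generalized gadget network, the greedy decomposition extracting the
value-4 spine path first yields `2n + 1` path flows (the remainder needs exactly
`2n` paths), whereas the whole flow decomposes into `n + 3` path flows; so the gap
between greedy and optimal is `n − 2`, which is arbitrarily large. -/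
theorem stmt11 (n : ℕ) (hn : 0 < n) :
    (gadgetNet n).Splittable 0 (2 * n + 1) (gadgetFlow n) (n + 3) ∧
    IsLeast {k : ℕ | (gadgetNet n).Splittable 0 (2 * n + 1)
      (gadgetFlow n - pathFlow (spinePath n) 4) k} (2 * n) := by
  obtain ⟨m, rfl⟩ : ∃ m, n = m + 1 := ⟨n - 1, by omega⟩
  rw [residual_eq]
  exact ⟨part1 m, part2upper m, fun k hk => part2lower m k hk⟩
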